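/- Let k be a field, A an associative unital k-algebra, and N a simple left A-module such that every A-linear endomorphism of N is multiplication by a scalar in k (End_A(N) = k). Let V be a finite-dimensional k-vector space and regard V ⊗_k N as a left A-module via the action of A on the factor N. Then the map V' ↦ V' ⊗_k N (the image of V' ⊗_k N in V ⊗_k N) is a bijection between the k-subspaces of V and the A-submodules of V ⊗_k N. -/

import Mathlib

open TensorProduct

set_option linter.unusedSectionVars false

section Aux

variable (k A N : Type) [Field k] [Ring A] [Algebra k A]
  [AddCommGroup N] [Module A N] [Module k N]
  [SMulCommClass A k N] [SMulCommClass k A N] [IsScalarTower k A N]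
  {V V₂ : Type} [AddCommGroup V] [Module k V] [AddCommGroup V₂] [Module k V₂]

/-- contraction against a functional, as an `A`-linear map. -/
noncomputable def pmap (φ : V →ₗ[k] k) : N ⊗[k] V →ₗ[A] N :=
  { toFun := (TensorProduct.rid k N).toLinearMap ∘ₗ (LinearMap.lTensor N φ)
    map_add' := by simp
    map_smul' := by
      intro a x
      induction x using TensorProduct.induction_on with
      | zero => simp
      | tmul n v => simp [TensorProduct.smul_tmul', smul_comm a (φ v) n]
      | add x y hx hy => simp_all }

@[simp] lemma pmap_tmul (φ : V →ₗ[k] k) (n : N) (v : V) :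
    pmap k A N φ (n ⊗ₜ v) = φ v • n := by simp [pmap]

/-- `id ⊗ φ`, as an `A`-linear map. -/
noncomputable def amap (φ : V →ₗ[k] V₂) : N ⊗[k] V →ₗ[A] N ⊗[k] V₂ :=
  { toFun := LinearMap.lTensor N φ
    map_add' := by simp
    map_smul' := by
      intro a x
      induction x using TensorProduct.induction_on with
      | zero => simp
      | tmul n v => simp [TensorProduct.smul_tmul']
      | add x y hx hy => simp_all }

@[simp] lemma amap_tmul (φ : V →ₗ[k] V₂) (n : N) (v : V) :
    amap k A N φ (n ⊗ₜ v) = n ⊗ₜ φ v := by simp [amap]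

/-- the submodule `N ⊗ V'`. -/
def FF (V' : Submodule k V) : Submodule A (N ⊗[k] V) :=
  Submodule.span A {x : N ⊗[k] V | ∃ (n : N) (v : V), v ∈ V' ∧ x = n ⊗ₜ[k] v}

lemma tmul_mem_FF {V' : Submodule k V} (n : N) {v : V} (hv : v ∈ V') :
    n ⊗ₜ[k] v ∈ FF k A N V' :=
  Submodule.subset_span ⟨n, v, hv, rfl⟩

lemma FF_mono {V' V'' : Submodule k V} (h : V' ≤ V'') : FF k A N V' ≤ FF k A N V'' :=
  Submodule.span_mono (fun x ⟨n, v, hv, hx⟩ => ⟨n, v, h hv, hx⟩)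

lemma expansion {ι : Type} [Fintype ι] (b : Module.Basis ι k V) (x : N ⊗[k] V) :
    x = ∑ i, (pmap k A N (b.coord i) x) ⊗ₜ[k] b i := by
  induction x using TensorProduct.induction_on with
  | zero => simp
  | tmul n v =>
    simp only [pmap_tmul, Module.Basis.coord_apply, TensorProduct.smul_tmul]
    rw [← TensorProduct.tmul_sum]
    rw [← b.sum_repr v]
    simp [Finset.smul_sum, Module.Basis.repr_self_apply]
  | add x y hx hy =>
    conv_lhs => rw [hx, hy]
    simp [map_add, TensorProduct.add_tmul, Finset.sum_add_distrib]


lemma lemC [IsSimpleModule A N]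
    (hEnd : ∀ g : N →ₗ[A] N, ∃ c : k, ∀ n : N, g n = c • n)
    [FiniteDimensional k V]
    (W : Submodule A (N ⊗[k] V)) (hW : W ≠ ⊥) :
    ∃ u : V, u ≠ 0 ∧ ∀ n : N, n ⊗ₜ[k] u ∈ W := by
  classical
  set b := Module.finBasis k V with hb
  set ι := Fin (Module.finrank k V)
  -- support of an element
  set supp : N ⊗[k] V → Finset ι :=
    fun x => Finset.univ.filter (fun i => pmap k A N (b.coord i) x ≠ 0) with hsupp
  have hsupp_empty : ∀ x : N ⊗[k] V, supp x = ∅ → x = 0 := by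
    intro x hx
    rw [expansion k A N b x]
    apply Finset.sum_eq_zero
    intro i _
    have : pmap k A N (b.coord i) x = 0 := by
      by_contra h
      have : i ∈ supp x := by simp [hsupp, h]
      simp [hx] at this
    rw [this, TensorProduct.zero_tmul]
  -- choose a nonzero element of minimal support
  obtain ⟨x₀, hx₀W, hx₀⟩ : ∃ x ∈ W, x ≠ 0 := by
    by_contra h
    push_neg at h
    exact hW (by ext x; simp only [Submodule.mem_bot]; exact ⟨fun hx => h x hx, fun hx => hx ▸ W.zero_mem⟩)
  have hP : ∃ m : ℕ, ∃ x, x ∈ W ∧ x ≠ 0 ∧ (supp x).card = m := ⟨_, x₀, hx₀W, hx₀, rfl⟩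
  obtain ⟨w₀, hw₀W, hw₀ne, hw₀card⟩ := Nat.find_spec hP
  have hmin : ∀ x, x ∈ W → x ≠ 0 → (supp w₀).card ≤ (supp x).card := by
    intro x hxW hx
    rw [hw₀card]
    exact Nat.find_min' hP ⟨x, hxW, hx, rfl⟩
  have hne : (supp w₀).Nonempty := by
    rcases Finset.eq_empty_or_nonempty (supp w₀) with h | h
    · exact absurd (hsupp_empty _ h) hw₀ne
    · exact h
  obtain ⟨i₀, hi₀⟩ := hne
  have hi₀ne : pmap k A N (b.coord i₀) w₀ ≠ 0 := by
    simpa [hsupp] using hi₀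
  set M : Submodule A (N ⊗[k] V) := Submodule.span A {w₀} with hM
  have hMW : M ≤ W := by
    rw [hM, Submodule.span_le, Set.singleton_subset_iff]; exact hw₀W
  set e : M →ₗ[A] N := (pmap k A N (b.coord i₀)).comp M.subtype with he
  have hinj : Function.Injective e := by
    rw [← LinearMap.ker_eq_bot]
    rw [eq_bot_iff]
    rintro ⟨m, hm⟩ hker
    simp only [LinearMap.mem_ker, he, LinearMap.comp_apply, Submodule.subtype_apply] at hker
    simp only [Submodule.mem_bot, Submodule.mk_eq_zero]
    by_contra hmne
    -- supp m ⊆ (supp w₀).erase i₀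
    obtain ⟨a, ha⟩ := Submodule.mem_span_singleton.mp hm
    have hsub : supp m ⊆ (supp w₀).erase i₀ := by
      intro i hi
      have hine : pmap k A N (b.coord i) m ≠ 0 := by simpa [hsupp] using hi
      rw [Finset.mem_erase]
      constructor
      · rintro rfl; exact hine hker
      · simp only [hsupp, Finset.mem_filter, Finset.mem_univ, true_and]
        intro h0
        apply hine
        rw [← ha, map_smul, h0, smul_zero]
    have h1 : (supp m).card < (supp w₀).card := by
      calc (supp m).card ≤ ((supp w₀).erase i₀).card := Finset.card_le_card hsub
        _ < (supp w₀).card := Finset.card_erase_lt_of_mem hi₀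
    exact absurd (hmin m (hMW hm) hmne) (not_le.mpr h1)
  have hsurj : Function.Surjective e := by
    rw [← LinearMap.range_eq_top]
    rcases eq_bot_or_eq_top (LinearMap.range e) with h | h
    · exfalso
      have : e ⟨w₀, Submodule.mem_span_singleton_self w₀⟩ = 0 := by
        have := LinearMap.mem_range_self e ⟨w₀, Submodule.mem_span_singleton_self w₀⟩
        rw [h] at this
        simpa using this
      exact hi₀ne (by simpa [he] using this)
    · exact h
  set E := LinearEquiv.ofBijective e ⟨hinj, hsurj⟩ with hE
  have hEsymm : ∀ n : N, ((E.symm n : M) : N ⊗[k] V) ∈ M := fun n => (E.symm n).2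
  set lam : ι → k := fun j => (hEnd (((pmap k A N (b.coord j)).comp M.subtype).comp
      (E.symm : N →ₗ[A] M))).choose with hlam
  have hlamspec : ∀ j (n : N), pmap k A N (b.coord j) ((E.symm n : M) : N ⊗[k] V) = lam j • n := by
    intro j n
    exact (hEnd (((pmap k A N (b.coord j)).comp M.subtype).comp (E.symm : N →ₗ[A] M))).choose_spec n
  set u : V := ∑ j, lam j • b j with hu
  have hkey : ∀ n : N, ((E.symm n : M) : N ⊗[k] V) = n ⊗ₜ[k] u := by
    intro n
    rw [expansion k A N b ((E.symm n : M) : N ⊗[k] V)]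
    rw [hu, TensorProduct.tmul_sum]
    apply Finset.sum_congr rfl
    intro j _
    rw [hlamspec j n, TensorProduct.smul_tmul]
  have huW : ∀ n : N, n ⊗ₜ[k] u ∈ W := fun n => hkey n ▸ hMW (hEsymm n)
  refine ⟨u, ?_, huW⟩
  intro hu0
  have : Nontrivial N := IsSimpleModule.nontrivial A N
  obtain ⟨n₀, hn₀⟩ := exists_ne (0 : N)
  have h0 : ((E.symm n₀ : M) : N ⊗[k] V) = 0 := by rw [hkey, hu0, TensorProduct.tmul_zero]
  have : E.symm n₀ = 0 := Subtype.ext h0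
  have : n₀ = 0 := by
    have := congrArg E this
    simpa using this
  exact hn₀ this

lemma key [IsSimpleModule A N]
    (hEnd : ∀ g : N →ₗ[A] N, ∃ c : k, ∀ n : N, g n = c • n) :
    ∀ (m : ℕ) (V : Type) [AddCommGroup V] [Module k V] [FiniteDimensional k V],
      Module.finrank k V = m → ∀ W : Submodule A (N ⊗[k] V),
        ∃ V' : Submodule k V, W = FF k A N V' := by
  intro m
  induction m using Nat.strong_induction_on with
  | _ m IH =>
  intro V _ _ _ hrank W
  by_cases hW : W = ⊥
  · refine ⟨⊥, ?_⟩
    rw [hW]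
    refine le_antisymm bot_le ?_
    rw [FF, Submodule.span_le]
    rintro x ⟨n, v, hv, rfl⟩
    have hv0 : v = 0 := by simpa using hv
    simp [hv0]
  · obtain ⟨u, hu0, hu⟩ := lemC k A N hEnd W hW
    set U : Submodule k V := Submodule.span k {u} with hU
    have hFU_le_W : FF k A N U ≤ W := by
      rw [FF, Submodule.span_le]
      rintro x ⟨n, v, hv, rfl⟩
      obtain ⟨c, rfl⟩ := Submodule.mem_span_singleton.mp hv
      rw [← TensorProduct.smul_tmul]
      exact hu (c • n)
    set q := amap k A N (V₂ := V ⧸ U) U.mkQ with hq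
    have hqco : ∀ x, q x = LinearMap.lTensor N U.mkQ x := fun x => rfl
    have hker : ∀ x : N ⊗[k] V, q x = 0 ↔ x ∈ FF k A N U := by
      intro x
      constructor
      · intro hx
        have hex : Function.Exact (LinearMap.lTensor N U.subtype) (LinearMap.lTensor N U.mkQ) :=
          lTensor_exact N (LinearMap.exact_subtype_mkQ U) (Submodule.mkQ_surjective U)
        obtain ⟨y, hy⟩ := (hex x).mp (by rw [← hqco]; exact hx)
        have himg : ∀ y : N ⊗[k] ↥U, LinearMap.lTensor N U.subtype y ∈ FF k A N U := by
          intro y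
          induction y using TensorProduct.induction_on with
          | zero => simp
          | tmul n v => simpa using tmul_mem_FF k A N n v.2
          | add a c ha hc => rw [map_add]; exact Submodule.add_mem _ ha hc
        rw [← hy]; exact himg y
      · intro hx
        have hle : FF k A N U ≤ LinearMap.ker q := by
          rw [FF, Submodule.span_le]
          rintro x ⟨n, v, hv, rfl⟩
          simp only [SetLike.mem_coe, LinearMap.mem_ker, hq, amap_tmul, Submodule.mkQ_apply]
          rw [(Submodule.Quotient.mk_eq_zero U).mpr hv, TensorProduct.tmul_zero]
        exact hle hx
    have hU1 : Module.finrank k ↥U = 1 := finrank_span_singleton hu0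
    have hVU := Submodule.finrank_quotient_add_finrank U
    have hlt : Module.finrank k (V ⧸ U) < m := by omega
    obtain ⟨V'b, hV'b⟩ := IH (Module.finrank k (V ⧸ U)) hlt (V ⧸ U) rfl (W.map q)
    set V' := V'b.comap U.mkQ with hV'
    have hUleV' : U ≤ V' := by
      intro x hx
      simp only [hV', Submodule.mem_comap, Submodule.mkQ_apply]
      rw [(Submodule.Quotient.mk_eq_zero U).mpr hx]
      exact Submodule.zero_mem _
    refine ⟨V', le_antisymm ?_ ?_⟩
    · intro w hw
      have h1 : q w ∈ FF k A N V'b := hV'b ▸ Submodule.mem_map_of_mem hw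
      have h2 : FF k A N V'b ≤ (FF k A N V').map q := by
        rw [FF, Submodule.span_le]
        rintro x ⟨n, vb, hvb, rfl⟩
        obtain ⟨v, rfl⟩ := Submodule.mkQ_surjective U vb
        exact ⟨n ⊗ₜ v, tmul_mem_FF k A N n (Submodule.mem_comap.mpr hvb), by simp [hq]⟩
      obtain ⟨y, hy, hyq⟩ := h2 h1
      have hd : w - y ∈ FF k A N U := (hker _).mp (by rw [map_sub, hyq, sub_self])
      have hd' : w - y ∈ FF k A N V' := FF_mono k A N hUleV' hd
      have := Submodule.add_mem _ hd' hy
      simpa using this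
    · rw [FF, Submodule.span_le]
      rintro x ⟨n, v, hv, rfl⟩
      have h1 : q (n ⊗ₜ[k] v) ∈ FF k A N V'b := by
        simp only [hq, amap_tmul]
        exact tmul_mem_FF k A N n (Submodule.mem_comap.mp hv)
      have h2 : q (n ⊗ₜ[k] v) ∈ W.map q := by rw [hV'b]; exact h1
      obtain ⟨w, hwW, hwq⟩ := h2
      have hd : n ⊗ₜ[k] v - w ∈ FF k A N U := (hker _).mp (by rw [map_sub, hwq, sub_self])
      have := Submodule.add_mem _ (hFU_le_W hd) hwW
      simpa using this

lemma mem_of_tmul_mem {V' : Submodule k V} {n₀ : N} (hn₀ : n₀ ≠ 0) {v : V}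
    (h : n₀ ⊗ₜ[k] v ∈ FF k A N V') : v ∈ V' := by
  by_contra hv
  have hmk : V'.mkQ v ≠ 0 := by
    simpa [Submodule.Quotient.mk_eq_zero] using hv
  obtain ⟨ψ, hψ⟩ : ∃ ψ : Module.Dual k (V ⧸ V'), ψ (V'.mkQ v) ≠ 0 := by
    by_contra hc
    push_neg at hc
    exact hmk ((Module.forall_dual_apply_eq_zero_iff k _).mp hc)
  set φ : V →ₗ[k] k := ψ ∘ₗ V'.mkQ with hφ
  have hkill : FF k A N V' ≤ LinearMap.ker (pmap k A N φ) := by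
    rw [FF, Submodule.span_le]
    rintro x ⟨n, w, hw, rfl⟩
    simp only [SetLike.mem_coe, LinearMap.mem_ker, pmap_tmul, hφ, LinearMap.comp_apply,
      Submodule.mkQ_apply]
    rw [(Submodule.Quotient.mk_eq_zero V').mpr hw, map_zero, zero_smul]
  have h0 : φ v • n₀ = 0 := by
    have := hkill h
    simpa using this
  apply hn₀
  have hφv : φ v ≠ 0 := hψ
  calc n₀ = (φ v)⁻¹ • (φ v • n₀) := by rw [smul_smul, inv_mul_cancel₀ hφv, one_smul]
    _ = 0 := by rw [h0, smul_zero]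

end Aux

/-- If `N` is a simple left `A`-module over a `k`-algebra `A`
with `End_A(N) = k`, and `V` is a finite-dimensional `k`-vector space, then
`V' ↦ N ⊗_k V'` (the image of `N ⊗_k V'` in `N ⊗_k V`, i.e. the `A`-submodule
generated by the pure tensors `n ⊗ v` with `v ∈ V'`) is a bijection between the
`k`-subspaces of `V` and the `A`-submodules of `N ⊗_k V`, where `A` acts through
the factor `N`. -/
theorem submodules_of_isotypic_module
    (k : Type) [Field k]
    (A : Type) [Ring A] [Algebra k A]
    (N : Type) [AddCommGroup N] [Module A N] [Module k N]
    [SMulCommClass A k N] [SMulCommClass k A N] [IsScalarTower k A N]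
    [IsSimpleModule A N]
    (hEnd : ∀ g : N →ₗ[A] N, ∃ c : k, ∀ n : N, g n = c • n)
    (V : Type) [AddCommGroup V] [Module k V] [FiniteDimensional k V] :
    Function.Bijective (fun V' : Submodule k V =>
      (Submodule.span A {x : N ⊗[k] V | ∃ (n : N) (v : V), v ∈ V' ∧ x = n ⊗ₜ[k] v} :
        Submodule A (N ⊗[k] V))) := by
  have : Nontrivial N := IsSimpleModule.nontrivial A N
  obtain ⟨n₀, hn₀⟩ := exists_ne (0 : N)
  constructor
  · intro V₁ V₂ h
    simp only at h
    have h' : FF k A N V₁ = FF k A N V₂ := h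
    apply le_antisymm
    · intro v hv
      exact mem_of_tmul_mem k A N hn₀ (h' ▸ tmul_mem_FF k A N n₀ hv)
    · intro v hv
      exact mem_of_tmul_mem k A N hn₀ (h' ▸ tmul_mem_FF k A N n₀ hv)
  · intro W
    obtain ⟨V', hV'⟩ := key k A N hEnd (Module.finrank k V) V rfl W
    exact ⟨V', hV'.symm⟩
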